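/- The space B̃V^{p(·)}(Ω) equipped with the norm ‖u‖_{B̃V^{p(·)}} := ‖u‖_{p(·)} + inf{λ > 0 : ρ̃_{BV^{p(·)}(Ω)}(u/λ) ≤ 1} is a Banach space: every Cauchy sequence in B̃V^{p(·)}(Ω) converges in this norm to an element of B̃V^{p(·)}(Ω). -/

import Mathlib

open MeasureTheory Filter Topology ENNReal Set

noncomputable section

/-- Euclidean space `ℝⁿ`. -/
abbrev Eu (n : ℕ) : Type := EuclideanSpace ℝ (Fin n)

/-- The modular `ρ_{p(·)}(u) = ∫_Ω |u|^{p(x)} dx`. -/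
def vModular {n : ℕ} (p : Eu n → ℝ) (Ω : Set (Eu n)) (u : Eu n → ℝ) : ℝ≥0∞ :=
  ∫⁻ x in Ω, ENNReal.ofReal (|u x| ^ p x)

/-- The gradient modular `∫_Ω |∇u|^{p(x)} dx` (for a.e. differentiable `u`,
`fderiv` is the gradient). -/
def gradModular {n : ℕ} (p : Eu n → ℝ) (Ω : Set (Eu n)) (u : Eu n → ℝ) : ℝ≥0∞ :=
  ∫⁻ x in Ω, ENNReal.ofReal (‖fderiv ℝ u x‖ ^ p x)

/-- Membership in the variable exponent Lebesgue space `L^{p(·)}(Ω)`. -/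
def MemLpVar {n : ℕ} (p : Eu n → ℝ) (Ω : Set (Eu n)) (u : Eu n → ℝ) : Prop :=
  Measurable u ∧ ∃ l : ℝ, 0 < l ∧ vModular p Ω (fun x => u x / l) < ⊤

/-- The Luxemburg norm on `L^{p(·)}(Ω)`. -/
def luxNorm {n : ℕ} (p : Eu n → ℝ) (Ω : Set (Eu n)) (u : Eu n → ℝ) : ℝ :=
  sInf {l : ℝ | 0 < l ∧ vModular p Ω (fun x => u x / l) ≤ 1}

/-- Convergence `v i → u` in `L^{p(·)}(Ω)` (Luxemburg norm convergence). -/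
def LpTendsto {n : ℕ} (p : Eu n → ℝ) (Ω : Set (Eu n)) (v : ℕ → Eu n → ℝ)
    (u : Eu n → ℝ) : Prop :=
  Tendsto (fun i => luxNorm p Ω (fun x => v i x - u x)) atTop (𝓝 0)

/-- `u` is locally Lipschitz on `Ω`. -/
def LocLipOn {n : ℕ} (Ω : Set (Eu n)) (u : Eu n → ℝ) : Prop :=
  ∀ x ∈ Ω, ∃ K : NNReal, ∃ t ∈ 𝓝[Ω] x, LipschitzOnWith K u t

/-- The relaxed mixed pseudo-modular `ρ̃_{BV^{p(·)}(Ω)}(u)`: the infimum of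
`liminf_i ∫_Ω |∇u_i|^{p(x)} dx` over all sequences of locally Lipschitz functions
in `L^{p(·)}(Ω)` converging to `u` in `L^{p(·)}(Ω)`. -/
def bvModular {n : ℕ} (p : Eu n → ℝ) (Ω : Set (Eu n)) (u : Eu n → ℝ) : ℝ≥0∞ :=
  ⨅ (v : ℕ → Eu n → ℝ)
    (_ : (∀ i, LocLipOn Ω (v i) ∧ MemLpVar p Ω (v i)) ∧ LpTendsto p Ω v u),
    Filter.liminf (fun i => gradModular p Ω (v i)) atTop

/-- Membership in the mixed space `B̃V^{p(·)}(Ω)`. -/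
def MemBVt {n : ℕ} (p : Eu n → ℝ) (Ω : Set (Eu n)) (u : Eu n → ℝ) : Prop :=
  MemLpVar p Ω u ∧ bvModular p Ω u < ⊤

/-- The norm `‖u‖_{B̃V^{p(·)}}`. -/
def bvNorm {n : ℕ} (p : Eu n → ℝ) (Ω : Set (Eu n)) (u : Eu n → ℝ) : ℝ :=
  luxNorm p Ω u + sInf {l : ℝ | 0 < l ∧ bvModular p Ω (fun x => u x / l) ≤ 1}

/-- The admissible class `Ã(E)` for the mixed capacity. -/
def admissibleBV {n : ℕ} (p : Eu n → ℝ) (Ω E : Set (Eu n)) : Set (Eu n → ℝ) :=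
  {u | MemBVt p Ω u ∧ (∀ x ∈ Ω, 0 ≤ u x ∧ u x ≤ 1) ∧
       ∃ U : Set (Eu n), IsOpen U ∧ E ⊆ U ∧ ∀ x ∈ U ∩ Ω, u x = 1}

/-- The mixed BV-Sobolev capacity `C̃_{BV^{p(·)}}(E)` (with `inf ∅ = ∞`). -/
def bvCapacity {n : ℕ} (p : Eu n → ℝ) (Ω E : Set (Eu n)) : ℝ≥0∞ :=
  ⨅ (u : Eu n → ℝ) (_ : u ∈ admissibleBV p Ω E), vModular p Ω u + bvModular p Ω u

/-- Divergence of a vector field. -/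
def divg {n : ℕ} (φ : Eu n → Eu n) (x : Eu n) : ℝ :=
  ∑ i, fderiv ℝ φ x (EuclideanSpace.single i 1) i

/-- Total variation `‖Du‖(U)` on an open set `U`, via the defining supremum over
`C¹` vector fields compactly supported in `U` with `|φ| ≤ 1`. -/
def totVarOpen {n : ℕ} (U : Set (Eu n)) (u : Eu n → ℝ) : ℝ≥0∞ :=
  ⨆ (φ : Eu n → Eu n)
    (_ : ContDiff ℝ 1 φ ∧ HasCompactSupport φ ∧ tsupport φ ⊆ U ∧ ∀ x, ‖φ x‖ ≤ 1),
    ENNReal.ofReal (∫ x in U, u x * divg φ x)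

/-- Total variation `‖Du‖(A)` of a set `A ⊆ Ω`, extended from open sets. -/
def totVarIn {n : ℕ} (Ω A : Set (Eu n)) (u : Eu n → ℝ) : ℝ≥0∞ :=
  ⨅ (U : Set (Eu n)) (_ : IsOpen U ∧ A ⊆ U ∧ U ⊆ Ω), totVarOpen U u

/-- `g` is the weak (distributional) gradient of `u` on `Ω`. -/
def IsWeakGrad {n : ℕ} (Ω : Set (Eu n)) (u : Eu n → ℝ) (g : Eu n → Eu n) : Prop :=
  ∀ φ : Eu n → ℝ, ContDiff ℝ 1 φ → HasCompactSupport φ → tsupport φ ⊆ Ω →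
    ∀ i : Fin n,
      (∫ x in Ω, u x * (fderiv ℝ φ x (EuclideanSpace.single i 1))) =
        - ∫ x in Ω, g x i * φ x

/-- The Harjulehto–Hästö–Latvala mixed pseudo-modular
`ρ_{BV^{p(·)}(F)}(u) = ‖Du‖(F ∩ Y) + ∫_{F∖Y} |∇u|^{p(x)} dx`, where `Y = {p = 1}`
and `g` is the weak gradient of `u` on the Sobolev part. -/
def hhlModular {n : ℕ} (p : Eu n → ℝ) (Ω F : Set (Eu n)) (u : Eu n → ℝ)
    (g : Eu n → Eu n) : ℝ≥0∞ :=
  totVarIn Ω (F ∩ {x | p x = 1}) u +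
    ∫⁻ x in F \ {x | p x = 1}, ENNReal.ofReal (‖g x‖ ^ p x)

/-- The HHL mixed pseudo-modular for (smooth) functions whose gradient is `fderiv`. -/
def hhlModularSmooth {n : ℕ} (p : Eu n → ℝ) (Ω F : Set (Eu n)) (v : Eu n → ℝ) : ℝ≥0∞ :=
  totVarIn Ω (F ∩ {x | p x = 1}) v +
    ∫⁻ x in F \ {x | p x = 1}, ENNReal.ofReal (‖fderiv ℝ v x‖ ^ p x)

/-- Membership in the HHL space `BV^{p(·)}(Ω)`: `u ∈ L^{p(·)}(Ω)` and
`inf{λ > 0 : ρ_{BV^{p(·)}(Ω)}(u/λ) ≤ 1} < ∞`. -/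
def MemBVp {n : ℕ} (p : Eu n → ℝ) (Ω : Set (Eu n)) (u : Eu n → ℝ) : Prop :=
  MemLpVar p Ω u ∧
    ∃ g : Eu n → Eu n, IsWeakGrad (Ω \ {x | p x = 1}) u g ∧
      ∃ l : ℝ, 0 < l ∧
        hhlModular p Ω Ω (fun x => u x / l) (fun x => l⁻¹ • g x) ≤ 1

/-- Mollification `u_δ = φ_δ ∗ u` (with `u` extended by zero outside `Ω`),
where `φ_δ(z) = δ^{-n} φ(z/δ)`. -/
def mollify {n : ℕ} (Ω : Set (Eu n)) (u : Eu n → ℝ) (φ : Eu n → ℝ) (δ : ℝ)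
    (x : Eu n) : ℝ :=
  ∫ y in Ω, (δ ^ n)⁻¹ * φ (δ⁻¹ • (x - y)) * u y

/-- `p` is (locally) log-Hölder continuous on `Ω` with constant `c`. -/
def LogHolderOn {n : ℕ} (c : ℝ) (Ω : Set (Eu n)) (p : Eu n → ℝ) : Prop :=
  ∀ x ∈ Ω, ∀ y ∈ Ω, |p x - p y| ≤ c / Real.log (Real.exp 1 + 1 / dist x y)

/-- `p` is globally log-Hölder continuous on `ℝⁿ` with constant `c`. -/
def LogHolderGlobal {n : ℕ} (c : ℝ) (p : Eu n → ℝ) : Prop :=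
  LogHolderOn c Set.univ p ∧
    ∃ pinf : ℝ, 1 ≤ pinf ∧ ∀ x, |p x - pinf| ≤ c / Real.log (Real.exp 1 + ‖x‖)

/-- The variable exponent Sobolev capacity `C_{p(·)}(E)`: infimum of
`∫ |u|^{p(x)} + |∇u|^{p(x)} dx` over `u ∈ W^{1,p(·)}(ℝⁿ)` with `u ≥ 1` on an
open set containing `E`. -/
def sobolevCapacity {n : ℕ} (p : Eu n → ℝ) (E : Set (Eu n)) : ℝ≥0∞ :=
  ⨅ (u : Eu n → ℝ) (g : Eu n → Eu n)
    (_ : MemLpVar p Set.univ u ∧ IsWeakGrad Set.univ u g ∧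
         MemLpVar p Set.univ (fun x => ‖g x‖) ∧
         ∃ U : Set (Eu n), IsOpen U ∧ E ⊆ U ∧ ∀ x ∈ U, 1 ≤ u x),
    vModular p Set.univ u + ∫⁻ x, ENNReal.ofReal (‖g x‖ ^ p x)

section Lemmas

variable {n : ℕ} {p : Eu n → ℝ} {Ω : Set (Eu n)}

lemma measurable_vint {u : Eu n → ℝ} (hpm : Measurable p) (hu : Measurable u) :
    Measurable fun x => ENNReal.ofReal (|u x| ^ p x) :=
  (hu.abs.pow hpm).ennreal_ofReal

lemma measurable_gint (hpm : Measurable p) (f : Eu n → ℝ) :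
    Measurable fun x => ENNReal.ofReal (‖fderiv ℝ f x‖ ^ p x) :=
  (((measurable_fderiv ℝ f).norm).pow hpm).ennreal_ofReal

lemma vmod_congr {u w : Eu n → ℝ} (h : ∀ x, |u x| = |w x|) :
    vModular p Ω u = vModular p Ω w := by
  unfold vModular
  congr 1
  funext x
  rw [h x]

lemma vmod_scale {u : Eu n → ℝ} (hpm : Measurable p) (hp1 : ∀ x ∈ Ω, 1 ≤ p x)
    (hΩ : MeasurableSet Ω) (hu : Measurable u) {l0 l : ℝ} (h0 : 0 < l0) (hl : l0 ≤ l) :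
    vModular p Ω (fun x => u x / l) ≤
      ENNReal.ofReal (l0 / l) * vModular p Ω (fun x => u x / l0) := by
  have hlpos : 0 < l := h0.trans_le hl
  unfold vModular
  rw [← lintegral_const_mul _ (measurable_vint hpm (hu.div_const l0))]
  refine lintegral_mono_ae ((ae_restrict_iff' hΩ).2 (ae_of_all _ fun x hx => ?_))
  have hc0 : 0 < l0 / l := div_pos h0 hlpos
  have hc1 : l0 / l ≤ 1 := (div_le_one hlpos).2 hl
  have h1 : |u x / l| = (l0 / l) * |u x / l0| := by
    rw [abs_div, abs_div, abs_of_pos h0, abs_of_pos hlpos]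
    field_simp
  rw [h1, Real.mul_rpow hc0.le (abs_nonneg _), ← ENNReal.ofReal_mul hc0.le]
  refine ENNReal.ofReal_le_ofReal (mul_le_mul_of_nonneg_right ?_
    (Real.rpow_nonneg (abs_nonneg _) _))
  calc (l0 / l) ^ p x ≤ (l0 / l) ^ (1:ℝ) :=
        Real.rpow_le_rpow_of_exponent_ge hc0 hc1 (hp1 x hx)
    _ = l0 / l := Real.rpow_one _

lemma vmod_add {a b : Eu n → ℝ} (hpm : Measurable p) (hp1 : ∀ x ∈ Ω, 1 ≤ p x)
    (hΩ : MeasurableSet Ω) (ha : Measurable a) (hb : Measurable b) {l : ℝ} (hl : 0 < l) :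
    vModular p Ω (fun x => (a x + b x) / (2 * l)) ≤
      vModular p Ω (fun x => a x / l) + vModular p Ω (fun x => b x / l) := by
  unfold vModular
  rw [← lintegral_add_left (measurable_vint hpm (ha.div_const l))]
  refine lintegral_mono_ae ((ae_restrict_iff' hΩ).2 (ae_of_all _ fun x hx => ?_))
  have hp0 : (0:ℝ) ≤ p x := (zero_le_one.trans (hp1 x hx))
  set A := |a x / l| with hA
  set B := |b x / l| with hB
  have key : |(a x + b x) / (2 * l)| ≤ max A B := by
    rw [abs_div, abs_of_pos (by positivity : (0:ℝ) < 2 * l)]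
    rw [div_le_iff₀ (by positivity)]
    have : |a x + b x| ≤ |a x| + |b x| := abs_add_le _ _
    have hA' : |a x| = A * l := by rw [hA, abs_div, abs_of_pos hl]; field_simp
    have hB' : |b x| = B * l := by rw [hB, abs_div, abs_of_pos hl]; field_simp
    have h2 : |a x| + |b x| ≤ 2 * max A B * l := by
      rw [hA', hB']
      nlinarith [le_max_left A B, le_max_right A B, hl.le, abs_nonneg (a x / l),
        abs_nonneg (b x / l)]
    linarith
  have h3 : |(a x + b x) / (2 * l)| ^ p x ≤ (max A B) ^ p x :=
    Real.rpow_le_rpow (abs_nonneg _) key hp0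
  have h4 : (max A B) ^ p x ≤ A ^ p x + B ^ p x := by
    rcases le_total A B with h | h
    · rw [max_eq_right h]
      exact le_add_of_nonneg_left (Real.rpow_nonneg (abs_nonneg _) _)
    · rw [max_eq_left h]
      exact le_add_of_nonneg_right (Real.rpow_nonneg (abs_nonneg _) _)
  calc ENNReal.ofReal (|(a x + b x) / (2 * l)| ^ p x)
      ≤ ENNReal.ofReal (A ^ p x + B ^ p x) :=
        ENNReal.ofReal_le_ofReal (h3.trans h4)
    _ = ENNReal.ofReal (A ^ p x) + ENNReal.ofReal (B ^ p x) :=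
        ENNReal.ofReal_add (Real.rpow_nonneg (abs_nonneg _) _)
          (Real.rpow_nonneg (abs_nonneg _) _)


lemma luxSet_bddBelow {u : Eu n → ℝ} :
    BddBelow {l : ℝ | 0 < l ∧ vModular p Ω (fun x => u x / l) ≤ 1} :=
  ⟨0, fun _ hy => hy.1.le⟩

lemma luxNorm_nonneg (u : Eu n → ℝ) : 0 ≤ luxNorm p Ω u :=
  Real.sInf_nonneg fun _ hy => hy.1.le

lemma luxNorm_le {u : Eu n → ℝ} {l : ℝ} (hl : 0 < l)
    (h : vModular p Ω (fun x => u x / l) ≤ 1) : luxNorm p Ω u ≤ l :=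
  csInf_le luxSet_bddBelow ⟨hl, h⟩

lemma luxSet_upclosed {u : Eu n → ℝ} (hpm : Measurable p) (hp1 : ∀ x ∈ Ω, 1 ≤ p x)
    (hΩ : MeasurableSet Ω) (hu : Measurable u) {l0 l : ℝ} (h0 : 0 < l0) (hle : l0 ≤ l)
    (h1 : vModular p Ω (fun x => u x / l0) ≤ 1) :
    vModular p Ω (fun x => u x / l) ≤ 1 := by
  calc vModular p Ω (fun x => u x / l)
      ≤ ENNReal.ofReal (l0 / l) * vModular p Ω (fun x => u x / l0) :=
        vmod_scale hpm hp1 hΩ hu h0 hle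
    _ ≤ ENNReal.ofReal (l0 / l) * 1 := mul_le_mul_right h1 _
    _ ≤ 1 := by
        rw [mul_one]
        exact ENNReal.ofReal_le_one.2 ((div_le_one (h0.trans_le hle)).2 hle)

lemma luxSet_nonempty {u : Eu n → ℝ} (hpm : Measurable p) (hp1 : ∀ x ∈ Ω, 1 ≤ p x)
    (hΩ : MeasurableSet Ω) (hu : MemLpVar p Ω u) :
    ∃ l : ℝ, 0 < l ∧ vModular p Ω (fun x => u x / l) ≤ 1 := by
  obtain ⟨hum, l0, h0, hfin⟩ := hu
  set M := vModular p Ω (fun x => u x / l0) with hM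
  refine ⟨l0 * (M.toReal + 1), by positivity, ?_⟩
  have h1 : l0 ≤ l0 * (M.toReal + 1) := by
    nlinarith [ENNReal.toReal_nonneg (a := M), h0]
  calc vModular p Ω (fun x => u x / (l0 * (M.toReal + 1)))
      ≤ ENNReal.ofReal (l0 / (l0 * (M.toReal + 1))) * M :=
        vmod_scale hpm hp1 hΩ hum h0 h1
    _ ≤ ENNReal.ofReal (l0 / (l0 * (M.toReal + 1))) * ENNReal.ofReal (M.toReal + 1) := by
        refine mul_le_mul_right ?_ _
        calc M = ENNReal.ofReal M.toReal := (ENNReal.ofReal_toReal hfin.ne).symm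
          _ ≤ ENNReal.ofReal (M.toReal + 1) := ENNReal.ofReal_le_ofReal (by linarith)
    _ = ENNReal.ofReal ((l0 / (l0 * (M.toReal + 1))) * (M.toReal + 1)) := by
        rw [ENNReal.ofReal_mul (by positivity)]
    _ ≤ 1 := by
        rw [show (l0 / (l0 * (M.toReal + 1))) * (M.toReal + 1) = 1 by
          field_simp]
        simp

lemma vmod_le_of_luxNorm_lt {u : Eu n → ℝ} (hpm : Measurable p) (hp1 : ∀ x ∈ Ω, 1 ≤ p x)
    (hΩ : MeasurableSet Ω) (hu : MemLpVar p Ω u) {c : ℝ} (hlt : luxNorm p Ω u < c) :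
    vModular p Ω (fun x => u x / c) ≤ 1 := by
  obtain ⟨l, hl, h1⟩ := luxSet_nonempty hpm hp1 hΩ hu
  have hne : Set.Nonempty {l : ℝ | 0 < l ∧ vModular p Ω (fun x => u x / l) ≤ 1} := ⟨l, hl, h1⟩
  obtain ⟨a, ⟨ha0, ha1⟩, hac⟩ := exists_lt_of_csInf_lt hne hlt
  exact luxSet_upclosed hpm hp1 hΩ hu.1 ha0 hac.le ha1

lemma memLp_neg {u : Eu n → ℝ} (hu : MemLpVar p Ω u) : MemLpVar p Ω (fun x => -u x) := by
  obtain ⟨hum, l, hl, hfin⟩ := hu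
  refine ⟨hum.neg, l, hl, ?_⟩
  rwa [vmod_congr (w := fun x => u x / l) (fun x => by rw [neg_div]; exact abs_neg _)]

lemma memLp_add {a b : Eu n → ℝ} (hpm : Measurable p) (hp1 : ∀ x ∈ Ω, 1 ≤ p x)
    (hΩ : MeasurableSet Ω) (ha : MemLpVar p Ω a) (hb : MemLpVar p Ω b) :
    MemLpVar p Ω (fun x => a x + b x) := by
  obtain ⟨ham, la, hla, hfa⟩ := ha
  obtain ⟨hbm, lb, hlb, hfb⟩ := hb
  set l := max la lb with hldef
  have hl : 0 < l := lt_max_of_lt_left hla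
  refine ⟨ham.add hbm, 2 * l, by positivity, ?_⟩
  have h1 : vModular p Ω (fun x => a x / l) < ⊤ :=
    lt_of_le_of_lt (vmod_scale hpm hp1 hΩ ham hla (le_max_left _ _))
      (ENNReal.mul_lt_top ENNReal.ofReal_lt_top hfa)
  have h2 : vModular p Ω (fun x => b x / l) < ⊤ :=
    lt_of_le_of_lt (vmod_scale hpm hp1 hΩ hbm hlb (le_max_right _ _))
      (ENNReal.mul_lt_top ENNReal.ofReal_lt_top hfb)
  exact lt_of_le_of_lt (vmod_add hpm hp1 hΩ ham hbm hl) (ENNReal.add_lt_top.2 ⟨h1, h2⟩)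

lemma memLp_sub {a b : Eu n → ℝ} (hpm : Measurable p) (hp1 : ∀ x ∈ Ω, 1 ≤ p x)
    (hΩ : MeasurableSet Ω) (ha : MemLpVar p Ω a) (hb : MemLpVar p Ω b) :
    MemLpVar p Ω (fun x => a x - b x) := by
  have := memLp_add hpm hp1 hΩ ha (memLp_neg hb)
  simpa [sub_eq_add_neg] using this

lemma memLp_const_mul {u : Eu n → ℝ} {s : ℝ} (hs : s ≠ 0) (hu : MemLpVar p Ω u) :
    MemLpVar p Ω (fun x => s * u x) := by
  obtain ⟨hum, l, hl, hfin⟩ := hu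
  refine ⟨hum.const_mul s, |s| * l, by positivity, ?_⟩
  rw [vmod_congr (w := fun x => u x / l) (fun x => ?_)]
  · exact hfin
  · rw [abs_div, abs_mul, abs_of_pos (by positivity : (0:ℝ) < |s| * l), abs_div,
      abs_of_pos hl, mul_div_mul_left _ _ (abs_ne_zero.2 hs)]

lemma luxNorm_congr {u w : Eu n → ℝ} (h : ∀ x, |u x| = |w x|) :
    luxNorm p Ω u = luxNorm p Ω w := by
  unfold luxNorm
  congr 1
  ext l
  constructor <;> intro ⟨h1, h2⟩ <;> refine ⟨h1, ?_⟩
  · rwa [vmod_congr (u := fun x => w x / l) (w := fun x => u x / l)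
      (fun x => by rw [abs_div, abs_div, h x])]
  · rwa [vmod_congr (u := fun x => u x / l) (w := fun x => w x / l)
      (fun x => by rw [abs_div, abs_div, h x])]

lemma luxNorm_smul_le {u : Eu n → ℝ} {s : ℝ} (hpm : Measurable p) (hp1 : ∀ x ∈ Ω, 1 ≤ p x)
    (hΩ : MeasurableSet Ω) (hs : s ≠ 0) (hu : MemLpVar p Ω u) :
    luxNorm p Ω (fun x => s * u x) ≤ |s| * luxNorm p Ω u := by
  refine le_of_forall_pos_le_add fun ε hε => ?_
  have hsx : 0 < |s| := abs_pos.2 hs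
  have hne : Set.Nonempty {l : ℝ | 0 < l ∧ vModular p Ω (fun x => u x / l) ≤ 1} :=
    luxSet_nonempty hpm hp1 hΩ hu
  obtain ⟨l, ⟨hl0, hl1⟩, hlt'⟩ := Real.lt_sInf_add_pos hne (div_pos hε hsx)
  have hlt : l < luxNorm p Ω u + ε / |s| := hlt' 
  have hmem : vModular p Ω (fun x => (s * u x) / (|s| * l)) ≤ 1 := by
    rw [vmod_congr (w := fun x => u x / l) (fun x => by
      rw [abs_div, abs_mul, abs_of_pos (show (0:ℝ) < |s| * l by positivity), abs_div,
        abs_of_pos hl0]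
      rw [mul_comm |s| l, mul_comm |s| (|u x|), mul_div_mul_right _ _ (abs_ne_zero.2 hs)])]
    exact hl1
  calc luxNorm p Ω (fun x => s * u x) ≤ |s| * l := luxNorm_le (by positivity) hmem
    _ ≤ |s| * (luxNorm p Ω u + ε / |s|) := by
        refine mul_le_mul_of_nonneg_left ?_ hsx.le
        exact hlt.le
    _ = |s| * luxNorm p Ω u + ε := by field_simp

lemma luxNorm_add_le {a b : Eu n → ℝ} (hpm : Measurable p) (hp1 : ∀ x ∈ Ω, 1 ≤ p x)
    (hΩ : MeasurableSet Ω) (ha : MemLpVar p Ω a) (hb : MemLpVar p Ω b) :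
    luxNorm p Ω (fun x => a x + b x) ≤ 2 * (luxNorm p Ω a + luxNorm p Ω b) := by
  refine le_of_forall_pos_le_add fun ε hε => ?_
  have hε4 : 0 < ε / 4 := by positivity
  have hnea : Set.Nonempty {l : ℝ | 0 < l ∧ vModular p Ω (fun x => a x / l) ≤ 1} :=
    luxSet_nonempty hpm hp1 hΩ ha
  have hneb : Set.Nonempty {l : ℝ | 0 < l ∧ vModular p Ω (fun x => b x / l) ≤ 1} :=
    luxSet_nonempty hpm hp1 hΩ hb
  obtain ⟨la, ⟨hla0, hla1⟩, hlta'⟩ := Real.lt_sInf_add_pos hnea hε4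
  obtain ⟨lb, ⟨hlb0, hlb1⟩, hltb'⟩ := Real.lt_sInf_add_pos hneb hε4
  have hlta : la < luxNorm p Ω a + ε / 4 := hlta'
  have hltb : lb < luxNorm p Ω b + ε / 4 := hltb' 
  have hsum : 0 < la + lb := by linarith
  have hmem : vModular p Ω (fun x => (a x + b x) / (2 * (la + lb))) ≤ 1 := by
    calc vModular p Ω (fun x => (a x + b x) / (2 * (la + lb)))
        ≤ vModular p Ω (fun x => a x / (la + lb)) +
            vModular p Ω (fun x => b x / (la + lb)) :=
          vmod_add hpm hp1 hΩ ha.1 hb.1 hsum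
      _ ≤ ENNReal.ofReal (la / (la + lb)) * 1 + ENNReal.ofReal (lb / (la + lb)) * 1 := by
          refine add_le_add ?_ ?_
          · exact le_trans (vmod_scale hpm hp1 hΩ ha.1 hla0 (by linarith))
              (mul_le_mul_right hla1 _)
          · exact le_trans (vmod_scale hpm hp1 hΩ hb.1 hlb0 (by linarith))
              (mul_le_mul_right hlb1 _)
      _ = ENNReal.ofReal (la / (la + lb) + lb / (la + lb)) := by
          rw [mul_one, mul_one, ENNReal.ofReal_add (by positivity) (by positivity)]
      _ ≤ 1 := by
          rw [← add_div, div_self hsum.ne']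
          simp
  calc luxNorm p Ω (fun x => a x + b x) ≤ 2 * (la + lb) :=
        luxNorm_le (by positivity) hmem
    _ ≤ 2 * (luxNorm p Ω a + luxNorm p Ω b) + ε := by nlinarith

/-! ### Rademacher for locally Lipschitz functions -/

lemma loclip_ae_diff {f : Eu n → ℝ} (hΩ : IsOpen Ω) (hf : LocLipOn Ω f) :
    ∀ᵐ x ∂(volume.restrict Ω), DifferentiableAt ℝ f x := by
  rw [ae_restrict_iff' hΩ.measurableSet]
  rw [ae_iff]
  have hset : {x | ¬(x ∈ Ω → DifferentiableAt ℝ f x)} =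
      {x | x ∈ Ω ∧ ¬ DifferentiableAt ℝ f x} := by
    ext x; simp [Classical.not_imp]
  rw [hset]
  set s := {x | x ∈ Ω ∧ ¬ DifferentiableAt ℝ f x} with hs
  refine measure_null_of_locally_null s fun x hx => ?_
  obtain ⟨K, t, ht, hlip⟩ := hf x hx.1
  obtain ⟨U, hUopen, hxU, hUsub⟩ := mem_nhdsWithin.1 ht
  set W := U ∩ Ω with hW
  have hWopen : IsOpen W := hUopen.inter hΩ
  have hxW : x ∈ W := ⟨hxU, hx.1⟩
  have hlipW : LipschitzOnWith K f W := hlip.mono hUsub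
  obtain ⟨g, hg, hfg⟩ := hlipW.extend_real
  have hgd : ∀ᵐ y ∂(volume : Measure (Eu n)), DifferentiableAt ℝ g y :=
    hg.ae_differentiableAt
  refine ⟨s ∩ W, inter_mem_nhdsWithin s (hWopen.mem_nhds hxW), ?_⟩
  refine measure_mono_null (fun y hy => ?_) (ae_iff.1 hgd)
  obtain ⟨hys, hyW⟩ := hy
  have heq : f =ᶠ[nhds y] g := Filter.eventuallyEq_of_mem (hWopen.mem_nhds hyW) hfg
  exact fun hdg => hys.2 (heq.differentiableAt_iff.2 hdg)

/-! ### gradModular lemmas -/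

lemma grad_const_mul {f : Eu n → ℝ} {s : ℝ} (hs : s ≠ 0) (x : Eu n) :
    ‖fderiv ℝ (fun y => s * f y) x‖ = |s| * ‖fderiv ℝ f x‖ := by
  by_cases h : DifferentiableAt ℝ f x
  · rw [fderiv_const_mul h s, norm_smul, Real.norm_eq_abs]
  · have h2 : ¬ DifferentiableAt ℝ (fun y => s * f y) x := by
      intro h2
      apply h
      have := h2.const_mul s⁻¹
      simpa [inv_mul_cancel_left₀ hs] using this
    rw [fderiv_zero_of_not_differentiableAt h, fderiv_zero_of_not_differentiableAt h2]
    simp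

lemma gradModular_smul_le {f : Eu n → ℝ} {s M' : ℝ} (hpm : Measurable p)
    (hp1 : ∀ x ∈ Ω, 1 ≤ p x) (hM' : ∀ x ∈ Ω, p x ≤ M') (hΩ : MeasurableSet Ω)
    (hs : s ≠ 0) :
    gradModular p Ω (fun y => s * f y) ≤
      ENNReal.ofReal ((max |s| 1) ^ M') * gradModular p Ω f := by
  unfold gradModular
  rw [← lintegral_const_mul _ (measurable_gint hpm f)]
  refine lintegral_mono_ae ((ae_restrict_iff' hΩ).2 (ae_of_all _ fun x hx => ?_))
  rw [grad_const_mul hs x, Real.mul_rpow (abs_nonneg s) (norm_nonneg _),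
    ← ENNReal.ofReal_mul (by positivity)]
  refine ENNReal.ofReal_le_ofReal (mul_le_mul_of_nonneg_right ?_
    (Real.rpow_nonneg (norm_nonneg _) _))
  calc |s| ^ p x ≤ (max |s| 1) ^ p x :=
        Real.rpow_le_rpow (abs_nonneg s) (le_max_left _ _)
          (zero_le_one.trans (hp1 x hx))
    _ ≤ (max |s| 1) ^ M' :=
        Real.rpow_le_rpow_of_exponent_le (le_max_right _ _) (hM' x hx)

lemma gradModular_smul_le_one {f : Eu n → ℝ} {s : ℝ} (hpm : Measurable p)
    (hp1 : ∀ x ∈ Ω, 1 ≤ p x) (hΩ : MeasurableSet Ω) (hs0 : 0 < s) (hs1 : s ≤ 1) :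
    gradModular p Ω (fun y => s * f y) ≤ ENNReal.ofReal s * gradModular p Ω f := by
  unfold gradModular
  rw [← lintegral_const_mul _ (measurable_gint hpm f)]
  refine lintegral_mono_ae ((ae_restrict_iff' hΩ).2 (ae_of_all _ fun x hx => ?_))
  rw [grad_const_mul hs0.ne' x, abs_of_pos hs0,
    Real.mul_rpow hs0.le (norm_nonneg _), ← ENNReal.ofReal_mul hs0.le]
  refine ENNReal.ofReal_le_ofReal (mul_le_mul_of_nonneg_right ?_
    (Real.rpow_nonneg (norm_nonneg _) _))
  calc s ^ p x ≤ s ^ (1:ℝ) := Real.rpow_le_rpow_of_exponent_ge hs0 hs1 (hp1 x hx)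
    _ = s := Real.rpow_one s

lemma gradModular_add_le {f g : Eu n → ℝ} {M' : ℝ} (hpm : Measurable p)
    (hp1 : ∀ x ∈ Ω, 1 ≤ p x) (hM' : ∀ x ∈ Ω, p x ≤ M') (hΩ : IsOpen Ω)
    (hf : LocLipOn Ω f) (hg : LocLipOn Ω g) :
    gradModular p Ω (fun x => f x + g x) ≤
      ENNReal.ofReal (2 ^ M') * (gradModular p Ω f + gradModular p Ω g) := by
  unfold gradModular
  rw [← lintegral_add_left (measurable_gint hpm f),
    ← lintegral_const_mul (f := fun a => ENNReal.ofReal (‖fderiv ℝ f a‖ ^ p a) +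
      ENNReal.ofReal (‖fderiv ℝ g a‖ ^ p a)) _ ((measurable_gint hpm f).add (measurable_gint hpm g))]
  refine lintegral_mono_ae ?_
  filter_upwards [loclip_ae_diff hΩ hf, loclip_ae_diff hΩ hg,
    (ae_restrict_iff' hΩ.measurableSet).2 (ae_of_all _ fun x hx => hx)] with x hdf hdg hx
  have hp0 : (0:ℝ) ≤ p x := zero_le_one.trans (hp1 x hx)
  rw [show (fun x => f x + g x) = f + g from rfl, fderiv_add hdf hdg]
  set A := ‖fderiv ℝ f x‖
  set B := ‖fderiv ℝ g x‖
  have h1 : ‖fderiv ℝ f x + fderiv ℝ g x‖ ^ p x ≤ (2 * max A B) ^ p x := by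
    refine Real.rpow_le_rpow (norm_nonneg _) ?_ hp0
    calc ‖fderiv ℝ f x + fderiv ℝ g x‖ ≤ A + B := norm_add_le _ _
      _ ≤ 2 * max A B := by
          rcases le_total A B with h | h
          · nlinarith [le_max_right A B]
          · nlinarith [le_max_left A B]
  have h2 : (2 * max A B) ^ p x = 2 ^ p x * (max A B) ^ p x :=
    Real.mul_rpow (by norm_num) (le_max_of_le_left (norm_nonneg _))
  have h3 : (max A B) ^ p x ≤ A ^ p x + B ^ p x := by
    rcases le_total A B with h | h
    · rw [max_eq_right h]
      exact le_add_of_nonneg_left (Real.rpow_nonneg (norm_nonneg _) _)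
    · rw [max_eq_left h]
      exact le_add_of_nonneg_right (Real.rpow_nonneg (norm_nonneg _) _)
  have h4 : (2:ℝ) ^ p x ≤ 2 ^ M' :=
    Real.rpow_le_rpow_of_exponent_le one_le_two (hM' x hx)
  calc ENNReal.ofReal (‖fderiv ℝ f x + fderiv ℝ g x‖ ^ p x)
      ≤ ENNReal.ofReal (2 ^ M' * (A ^ p x + B ^ p x)) := by
        refine ENNReal.ofReal_le_ofReal ?_
        calc ‖fderiv ℝ f x + fderiv ℝ g x‖ ^ p x ≤ 2 ^ p x * (max A B) ^ p x := by
              rw [← h2]; exact h1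
          _ ≤ 2 ^ M' * (A ^ p x + B ^ p x) := by
              refine mul_le_mul h4 h3 (Real.rpow_nonneg ?_ _) (by positivity)
              exact le_max_of_le_left (norm_nonneg _)
    _ = ENNReal.ofReal (2 ^ M') * (ENNReal.ofReal (A ^ p x) + ENNReal.ofReal (B ^ p x)) := by
        rw [ENNReal.ofReal_mul (by positivity),
          ENNReal.ofReal_add (Real.rpow_nonneg (norm_nonneg _) _)
            (Real.rpow_nonneg (norm_nonneg _) _)]

/-! ### bvModular lemmas -/

def Adm (p : Eu n → ℝ) (Ω : Set (Eu n)) (c : ℕ → Eu n → ℝ) (z : Eu n → ℝ) : Prop :=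
  (∀ i, LocLipOn Ω (c i) ∧ MemLpVar p Ω (c i)) ∧ LpTendsto p Ω c z

lemma bv_le_of_forall {z : Eu n → ℝ} {c : ℕ → Eu n → ℝ} {D : ℝ≥0∞}
    (hadm : Adm p Ω c z) (hD : ∀ k, gradModular p Ω (c k) ≤ D) :
    bvModular p Ω z ≤ D := by
  calc bvModular p Ω z ≤ Filter.liminf (fun i => gradModular p Ω (c i)) atTop := by
        unfold bvModular
        exact iInf_le_of_le c (iInf_le _ hadm)
    _ ≤ Filter.liminf (fun _ => D) atTop :=
        Filter.liminf_le_liminf (Filter.Eventually.of_forall hD)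
    _ = D := Filter.liminf_const D

lemma bv_ext {z : Eu n → ℝ} {B : ℝ≥0∞} (h : bvModular p Ω z < B) :
    ∃ c : ℕ → Eu n → ℝ, Adm p Ω c z ∧ ∀ k, gradModular p Ω (c k) < B := by
  unfold bvModular at h
  rw [iInf_lt_iff] at h
  obtain ⟨v, hv⟩ := h
  rw [iInf_lt_iff] at hv
  obtain ⟨hadm, hlim⟩ := hv
  have hfreq : ∃ᶠ k in atTop, gradModular p Ω (v k) < B :=
    Filter.frequently_lt_of_liminf_lt (by isBoundedDefault) hlim
  obtain ⟨ψ, hψmono, hψ⟩ := Filter.extraction_of_frequently_atTop hfreq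
  refine ⟨fun k => v (ψ k), ⟨fun k => hadm.1 (ψ k), ?_⟩, hψ⟩
  exact hadm.2.comp hψmono.tendsto_atTop

lemma adm_const_mul {z : Eu n → ℝ} {c : ℕ → Eu n → ℝ} {s : ℝ} (hpm : Measurable p)
    (hp1 : ∀ x ∈ Ω, 1 ≤ p x) (hΩ : MeasurableSet Ω) (hs : s ≠ 0)
    (hz : MemLpVar p Ω z) (hadm : Adm p Ω c z) :
    Adm p Ω (fun k x => s * c k x) (fun x => s * z x) := by
  obtain ⟨hprops, htend⟩ := hadm
  constructor
  · intro k
    refine ⟨?_, memLp_const_mul hs (hprops k).2⟩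
    intro x hx
    obtain ⟨K, t, ht, hlip⟩ := (hprops k).1 x hx
    refine ⟨⟨|s|, abs_nonneg s⟩ * K, t, ht, ?_⟩
    rw [lipschitzOnWith_iff_dist_le_mul] at hlip ⊢
    intro a ha b hb
    calc dist (s * c k a) (s * c k b) = |s| * dist (c k a) (c k b) := by
          rw [Real.dist_eq, Real.dist_eq, ← mul_sub, abs_mul]
      _ ≤ |s| * (K * dist a b) :=
          mul_le_mul_of_nonneg_left (hlip a ha b hb) (abs_nonneg s)
      _ = ((⟨|s|, abs_nonneg s⟩ * K : NNReal) : ℝ) * dist a b := by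
          change |s| * (↑K * dist a b) = (|s| * ↑K) * dist a b
          ring
  · have key : ∀ k, luxNorm p Ω (fun x => s * c k x - s * z x) ≤
        |s| * luxNorm p Ω (fun x => c k x - z x) := by
      intro k
      have h1 : (fun x => s * c k x - s * z x) = fun x => s * (c k x - z x) := by
        funext x; ring
      rw [h1]
      exact luxNorm_smul_le hpm hp1 hΩ hs (memLp_sub hpm hp1 hΩ (hprops k).2 hz)
    refine squeeze_zero (fun k => luxNorm_nonneg _) key ?_
    have := htend.const_mul |s|
    simpa using this

lemma bv_smul {z : Eu n → ℝ} {s M' : ℝ} {B : ℝ≥0∞} (hpm : Measurable p)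
    (hp1 : ∀ x ∈ Ω, 1 ≤ p x) (hM' : ∀ x ∈ Ω, p x ≤ M') (hΩ : MeasurableSet Ω)
    (hs : s ≠ 0) (hz : MemLpVar p Ω z) (hB : bvModular p Ω z < B) :
    bvModular p Ω (fun x => s * z x) ≤ ENNReal.ofReal ((max |s| 1) ^ M') * B := by
  obtain ⟨c, hadm, hgrad⟩ := bv_ext hB
  refine bv_le_of_forall (adm_const_mul hpm hp1 hΩ hs hz hadm) fun k => ?_
  calc gradModular p Ω (fun x => s * c k x)
      ≤ ENNReal.ofReal ((max |s| 1) ^ M') * gradModular p Ω (c k) :=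
        gradModular_smul_le hpm hp1 hM' hΩ hs
    _ ≤ ENNReal.ofReal ((max |s| 1) ^ M') * B := mul_le_mul_right (hgrad k).le _

lemma bv_smul_le_one {z : Eu n → ℝ} {s : ℝ} {B : ℝ≥0∞} (hpm : Measurable p)
    (hp1 : ∀ x ∈ Ω, 1 ≤ p x) (hΩ : MeasurableSet Ω)
    (hs0 : 0 < s) (hs1 : s ≤ 1) (hz : MemLpVar p Ω z) (hB : bvModular p Ω z < B) :
    bvModular p Ω (fun x => s * z x) ≤ ENNReal.ofReal s * B := by
  obtain ⟨c, hadm, hgrad⟩ := bv_ext hB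
  refine bv_le_of_forall (adm_const_mul hpm hp1 hΩ hs0.ne' hz hadm) fun k => ?_
  calc gradModular p Ω (fun x => s * c k x)
      ≤ ENNReal.ofReal s * gradModular p Ω (c k) :=
        gradModular_smul_le_one hpm hp1 hΩ hs0 hs1
    _ ≤ ENNReal.ofReal s * B := mul_le_mul_right (hgrad k).le _

lemma locLipOn_add {f g : Eu n → ℝ} (hf : LocLipOn Ω f) (hg : LocLipOn Ω g) :
    LocLipOn Ω (fun x => f x + g x) := by
  intro x hx
  obtain ⟨K1, t1, ht1, hlip1⟩ := hf x hx
  obtain ⟨K2, t2, ht2, hlip2⟩ := hg x hx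
  exact ⟨K1 + K2, t1 ∩ t2, Filter.inter_mem ht1 ht2,
    (hlip1.mono inter_subset_left).add (hlip2.mono inter_subset_right)⟩

lemma bv_add {a b : Eu n → ℝ} {M' : ℝ} {A B : ℝ≥0∞} (hpm : Measurable p)
    (hp1 : ∀ x ∈ Ω, 1 ≤ p x) (hM' : ∀ x ∈ Ω, p x ≤ M') (hΩ : IsOpen Ω)
    (ha : MemLpVar p Ω a) (hb : MemLpVar p Ω b)
    (hA : bvModular p Ω a < A) (hB : bvModular p Ω b < B) :
    bvModular p Ω (fun x => a x + b x) ≤ ENNReal.ofReal (2 ^ M') * (A + B) := by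
  obtain ⟨c, hadmc, hgradc⟩ := bv_ext hA
  obtain ⟨d, hadmd, hgradd⟩ := bv_ext hB
  have hadm : Adm p Ω (fun k x => c k x + d k x) (fun x => a x + b x) := by
    constructor
    · intro k
      exact ⟨locLipOn_add (hadmc.1 k).1 (hadmd.1 k).1,
        memLp_add hpm hp1 hΩ.measurableSet (hadmc.1 k).2 (hadmd.1 k).2⟩
    · have key : ∀ k, luxNorm p Ω (fun x => (c k x + d k x) - (a x + b x)) ≤
          2 * (luxNorm p Ω (fun x => c k x - a x) + luxNorm p Ω (fun x => d k x - b x)) := by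
        intro k
        have h1 : (fun x => (c k x + d k x) - (a x + b x)) =
            fun x => (c k x - a x) + (d k x - b x) := by funext x; ring
        rw [h1]
        exact luxNorm_add_le hpm hp1 hΩ.measurableSet
          (memLp_sub hpm hp1 hΩ.measurableSet (hadmc.1 k).2 ha)
          (memLp_sub hpm hp1 hΩ.measurableSet (hadmd.1 k).2 hb)
      refine squeeze_zero (fun k => luxNorm_nonneg _) key ?_
      have := (hadmc.2.add hadmd.2).const_mul 2
      simpa using this
  refine bv_le_of_forall hadm fun k => ?_
  calc gradModular p Ω (fun x => c k x + d k x)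
      ≤ ENNReal.ofReal (2 ^ M') * (gradModular p Ω (c k) + gradModular p Ω (d k)) :=
        gradModular_add_le hpm hp1 hM' hΩ (hadmc.1 k).1 (hadmd.1 k).1
    _ ≤ ENNReal.ofReal (2 ^ M') * (A + B) :=
        mul_le_mul_right (add_le_add (hgradc k).le (hgradd k).le) _

lemma memLp_div {w : Eu n → ℝ} {l : ℝ} (hl : l ≠ 0) (hw : MemLpVar p Ω w) :
    MemLpVar p Ω (fun x => w x / l) := by
  have := memLp_const_mul (inv_ne_zero hl) hw
  simpa [inv_mul_eq_div] using this

lemma bv_upclosed {w : Eu n → ℝ} (hpm : Measurable p) (hp1 : ∀ x ∈ Ω, 1 ≤ p x)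
    (hΩ : MeasurableSet Ω) (hw : MemLpVar p Ω w) {l' l : ℝ} (h0 : 0 < l') (hle : l' ≤ l)
    (h1 : bvModular p Ω (fun x => w x / l') ≤ 1) :
    bvModular p Ω (fun x => w x / l) ≤ 1 := by
  rcases eq_or_lt_of_le hle with rfl | hlt
  · exact h1
  have hl : 0 < l := h0.trans hlt
  have hs0 : 0 < l' / l := div_pos h0 hl
  have hs1 : l' / l ≤ 1 := (div_le_one hl).2 hle
  have hz : MemLpVar p Ω (fun x => w x / l') := memLp_div h0.ne' hw
  have hBlt : bvModular p Ω (fun x => w x / l') < ENNReal.ofReal (l / l') :=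
    lt_of_le_of_lt h1 (by
      rw [← ENNReal.ofReal_one]
      exact ENNReal.ofReal_lt_ofReal_iff_of_nonneg zero_le_one |>.2
        ((one_lt_div h0).2 hlt))
  have := bv_smul_le_one hpm hp1 hΩ hs0 hs1 hz hBlt
  have heq : (fun x => l' / l * (w x / l')) = fun x => w x / l := by
    funext x
    field_simp
  rw [heq] at this
  calc bvModular p Ω (fun x => w x / l)
      ≤ ENNReal.ofReal (l' / l) * ENNReal.ofReal (l / l') := this
    _ = ENNReal.ofReal ((l' / l) * (l / l')) := (ENNReal.ofReal_mul hs0.le).symm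
    _ = 1 := by
        rw [div_mul_div_comm, show l' * l / (l * l') = 1 by
          rw [mul_comm l l']
          exact div_self (by positivity)]
        simp

lemma bv_nonempty_diff {a b : Eu n → ℝ} {M' : ℝ} (hpm : Measurable p)
    (hp1 : ∀ x ∈ Ω, 1 ≤ p x) (hM' : ∀ x ∈ Ω, p x ≤ M') (hΩ : IsOpen Ω)
    (ha : MemBVt p Ω a) (hb : MemBVt p Ω b) :
    ∃ l : ℝ, 0 < l ∧ bvModular p Ω (fun x => (a x - b x) / l) ≤ 1 := by
  have hnegb : bvModular p Ω (fun x => -b x) ≤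
      ENNReal.ofReal ((max |(-1:ℝ)| 1) ^ M') * (bvModular p Ω b + 1) := by
    have := bv_smul hpm hp1 hM' hΩ.measurableSet (by norm_num : (-1:ℝ) ≠ 0) hb.1
      (ENNReal.lt_add_right hb.2.ne one_ne_zero)
    have heq : (fun x => (-1:ℝ) * b x) = fun x => -b x := by funext x; ring
    rwa [heq] at this
  set F1 := ENNReal.ofReal ((max |(-1:ℝ)| 1) ^ M') * (bvModular p Ω b + 1) with hF1
  have hF1ne : F1 ≠ ⊤ :=
    ENNReal.mul_ne_top ENNReal.ofReal_ne_top
      (by simp [ENNReal.add_ne_top, hb.2.ne])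
  have hsum : bvModular p Ω (fun x => a x + -b x) ≤
      ENNReal.ofReal (2 ^ M') * ((bvModular p Ω a + 1) + (F1 + 1)) :=
    bv_add hpm hp1 hM' hΩ ha.1 (memLp_neg hb.1)
      (ENNReal.lt_add_right ha.2.ne one_ne_zero)
      (lt_of_le_of_lt hnegb (ENNReal.lt_add_right hF1ne one_ne_zero))
  have heq2 : (fun x => a x + -b x) = fun x => a x - b x := by
    funext x; ring
  rw [heq2] at hsum
  set K := ENNReal.ofReal (2 ^ M') * ((bvModular p Ω a + 1) + (F1 + 1)) with hK
  have hKne : K ≠ ⊤ :=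
    ENNReal.mul_ne_top ENNReal.ofReal_ne_top
      (by simp [ENNReal.add_ne_top, ha.2.ne, hF1ne])
  set l := max (K + 1).toReal 1 with hldef
  have hl1 : (1:ℝ) ≤ l := le_max_right _ _
  have hl : 0 < l := lt_of_lt_of_le one_pos hl1
  have hs0 : 0 < l⁻¹ := by positivity
  have hs1 : l⁻¹ ≤ 1 := by
    rw [inv_le_one_iff₀]
    right; exact hl1
  have hKlt : bvModular p Ω (fun x => a x - b x) < K + 1 :=
    lt_of_le_of_lt hsum (ENNReal.lt_add_right hKne one_ne_zero)
  have hmemab : MemLpVar p Ω (fun x => a x - b x) :=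
    memLp_sub hpm hp1 hΩ.measurableSet ha.1 hb.1
  have hfin := bv_smul_le_one hpm hp1 hΩ.measurableSet hs0 hs1 hmemab hKlt
  have heq3 : (fun x => l⁻¹ * (a x - b x)) = fun x => (a x - b x) / l := by
    funext x
    rw [inv_mul_eq_div]
  rw [heq3] at hfin
  refine ⟨l, hl, ?_⟩
  calc bvModular p Ω (fun x => (a x - b x) / l)
      ≤ ENNReal.ofReal l⁻¹ * (K + 1) := hfin
    _ ≤ ENNReal.ofReal l⁻¹ * ENNReal.ofReal l := by
        refine mul_le_mul_right ?_ _
        calc K + 1 = ENNReal.ofReal (K + 1).toReal :=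
              (ENNReal.ofReal_toReal (by simp [ENNReal.add_ne_top, hKne])).symm
          _ ≤ ENNReal.ofReal l := ENNReal.ofReal_le_ofReal (le_max_left _ _)
    _ = ENNReal.ofReal (l⁻¹ * l) := (ENNReal.ofReal_mul hs0.le).symm
    _ = 1 := by
        rw [inv_mul_cancel₀ hl.ne']
        simp

lemma bv_lsc {W : ℕ → Eu n → ℝ} {w : Eu n → ℝ} (hpm : Measurable p)
    (hp1 : ∀ x ∈ Ω, 1 ≤ p x) (hΩ : MeasurableSet Ω)
    (hWlp : ∀ j, MemLpVar p Ω (W j)) (hwlp : MemLpVar p Ω w)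
    (hW1 : ∀ j, bvModular p Ω (W j) ≤ 1)
    (hconv : Tendsto (fun j => luxNorm p Ω (fun x => W j x - w x)) atTop (𝓝 0)) :
    bvModular p Ω w ≤ 1 := by
  have hBlt : ∀ j : ℕ, bvModular p Ω (W j) < 1 + (2⁻¹ : ℝ≥0∞) ^ j := fun j =>
    lt_of_le_of_lt (hW1 j)
      (ENNReal.lt_add_right one_ne_top (pow_ne_zero j (by norm_num)))
  have H : ∀ j : ℕ, ∃ c : ℕ → Eu n → ℝ, Adm p Ω c (W j) ∧
      ∀ k, gradModular p Ω (c k) < 1 + (2⁻¹ : ℝ≥0∞) ^ j := fun j => bv_ext (hBlt j)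
  choose c hadm hgrad using H
  have H2 : ∀ j : ℕ, ∃ k, luxNorm p Ω (fun x => c j k x - W j x) < (2⁻¹ : ℝ) ^ j := by
    intro j
    have := (hadm j).2.eventually_lt_const (by positivity : (0:ℝ) < (2⁻¹ : ℝ) ^ j)
    exact this.exists
  choose k hk using H2
  set e : ℕ → Eu n → ℝ := fun j => c j (k j) with he
  have hadm' : Adm p Ω e w := by
    constructor
    · exact fun j => (hadm j).1 (k j)
    · have key : ∀ j, luxNorm p Ω (fun x => e j x - w x) ≤
          2 * (luxNorm p Ω (fun x => e j x - W j x) +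
            luxNorm p Ω (fun x => W j x - w x)) := by
        intro j
        have h1 : (fun x => e j x - w x) =
            fun x => (e j x - W j x) + (W j x - w x) := by funext x; ring
        rw [h1]
        exact luxNorm_add_le hpm hp1 hΩ
          (memLp_sub hpm hp1 hΩ ((hadm j).1 (k j)).2 (hWlp j))
          (memLp_sub hpm hp1 hΩ (hWlp j) hwlp)
      refine squeeze_zero (g := fun j => 2 * ((2⁻¹ : ℝ) ^ j +
          luxNorm p Ω (fun x => W j x - w x))) (fun j => luxNorm_nonneg _)
        (fun j => (key j).trans ?_) ?_
      · exact mul_le_mul_of_nonneg_left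
          (add_le_add_left (hk j).le _) (by norm_num)
      · have h2 : Tendsto (fun j : ℕ => (2⁻¹ : ℝ) ^ j) atTop (𝓝 0) :=
          tendsto_pow_atTop_nhds_zero_of_lt_one (by norm_num) (by norm_num)
        have := (h2.add hconv).const_mul 2
        simpa using this
  have hlimB : Tendsto (fun j : ℕ => 1 + (2⁻¹ : ℝ≥0∞) ^ j) atTop (𝓝 1) := by
    have := (ENNReal.tendsto_pow_atTop_nhds_zero_of_lt_one
      (by norm_num : (2⁻¹ : ℝ≥0∞) < 1)).const_add (1 : ℝ≥0∞)
    simpa using this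
  calc bvModular p Ω w ≤ Filter.liminf (fun j => gradModular p Ω (e j)) atTop := by
        unfold bvModular
        exact iInf_le_of_le e (iInf_le _ hadm')
    _ ≤ Filter.liminf (fun j : ℕ => 1 + (2⁻¹ : ℝ≥0∞) ^ j) atTop :=
        Filter.liminf_le_liminf (Filter.Eventually.of_forall fun j => (hgrad j (k j)).le)
    _ = 1 := hlimB.liminf_eq

end Lemmas

/-- `B̃V^{p(·)}(Ω)` is a Banach space: every Cauchy sequence in
the norm `‖·‖_{B̃V}` converges to an element of the space. -/
theorem bvSpace_complete
    {n : ℕ} (p : Eu n → ℝ) (Ω : Set (Eu n)) (hΩ : IsOpen Ω)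
    (hpm : Measurable p) (hp1 : ∀ x ∈ Ω, 1 ≤ p x) (hpb : ∃ M : ℝ, ∀ x ∈ Ω, p x ≤ M) :
    ∀ u : ℕ → Eu n → ℝ, (∀ i, MemBVt p Ω (u i)) →
      (∀ ε : ℝ, 0 < ε → ∃ N : ℕ, ∀ i ≥ N, ∀ j ≥ N,
        bvNorm p Ω (fun x => u i x - u j x) < ε) →
      ∃ v : Eu n → ℝ, MemBVt p Ω v ∧
        Tendsto (fun i => bvNorm p Ω (fun x => u i x - v x)) atTop (𝓝 0) := by
  intro u hu hcau
  obtain ⟨M, hM⟩ := hpb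
  set M' := max M 1 with hM'def
  have hM' : ∀ x ∈ Ω, p x ≤ M' := fun x hx => (hM x hx).trans (le_max_left _ _)
  have hΩm : MeasurableSet Ω := hΩ.measurableSet
  have hui : ∀ i, MemLpVar p Ω (u i) := fun i => (hu i).1
  -- Cauchy in the Luxemburg norm
  have hCl : ∀ ε : ℝ, 0 < ε → ∃ N, ∀ i ≥ N, ∀ j ≥ N,
      luxNorm p Ω (fun x => u i x - u j x) < ε := by
    intro ε hε
    obtain ⟨N, hN⟩ := hcau ε hε
    refine ⟨N, fun i hi j hj => lt_of_le_of_lt ?_ (hN i hi j hj)⟩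
    exact le_add_of_nonneg_right (Real.sInf_nonneg fun y hy => hy.1.le)
  -- fast subsequence
  have hNk : ∀ k : ℕ, ∃ N, ∀ i ≥ N, ∀ j ≥ N,
      luxNorm p Ω (fun x => u i x - u j x) < (2⁻¹:ℝ)^k :=
    fun k => hCl _ (by positivity)
  choose Nf hNf using hNk
  set φ : ℕ → ℕ := fun k => k + (Finset.range (k+1)).sup Nf with hφdef
  have hφmono : StrictMono φ := by
    intro a b hab
    have h1 : (Finset.range (a+1)).sup Nf ≤ (Finset.range (b+1)).sup Nf :=
      Finset.sup_mono (Finset.range_subset_range.2 (by omega))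
    simp only [hφdef]
    omega
  have hφge : ∀ k, k ≤ φ k := fun k => Nat.le_add_right _ _
  have hφNf : ∀ k, Nf k ≤ φ k := fun k =>
    le_trans (Finset.le_sup (Finset.self_mem_range_succ k)) (Nat.le_add_left _ _)
  have hd : ∀ k, luxNorm p Ω (fun x => u (φ (k+1)) x - u (φ k) x) < (2⁻¹:ℝ)^k :=
    fun k => hNf k (φ (k+1)) (le_trans (hφNf k) (hφmono (Nat.lt_succ_self k)).le)
      (φ k) (hφNf k)
  have hmodd : ∀ k, vModular p Ω
      (fun x => (u (φ (k+1)) x - u (φ k) x) / (2⁻¹:ℝ)^k) ≤ 1 := fun k =>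
    vmod_le_of_luxNorm_lt hpm hp1 hΩm
      (memLp_sub hpm hp1 hΩm (hui _) (hui _)) (hd k)
  -- summability and a.e. convergence
  set g : ℕ → Eu n → ℝ≥0∞ := fun k x =>
    ENNReal.ofReal ((2⁻¹:ℝ)^k * |(u (φ (k+1)) x - u (φ k) x) / (2⁻¹:ℝ)^k| ^ p x)
    with hgdef
  have hgmeas : ∀ k, Measurable (g k) := fun k =>
    (measurable_const.mul
      ((((hui (φ (k+1))).1.sub (hui (φ k)).1).div_const _).abs.pow hpm)).ennreal_ofReal
  have hgint : ∀ k, ∫⁻ x in Ω, g k x ≤ ENNReal.ofReal ((2⁻¹:ℝ)^k) := by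
    intro k
    have heq : ∫⁻ x in Ω, g k x = ENNReal.ofReal ((2⁻¹:ℝ)^k) *
        vModular p Ω (fun x => (u (φ (k+1)) x - u (φ k) x) / (2⁻¹:ℝ)^k) := by
      unfold vModular
      rw [← lintegral_const_mul (f := fun x => ENNReal.ofReal
          (|(u (φ (k+1)) x - u (φ k) x) / (2⁻¹:ℝ)^k| ^ p x)) _ (measurable_vint hpm
        (((hui (φ (k+1))).1.sub (hui (φ k)).1).div_const _))]
      refine lintegral_congr fun x => ?_
      rw [← ENNReal.ofReal_mul (by positivity)]
    rw [heq]
    calc ENNReal.ofReal ((2⁻¹:ℝ)^k) *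
        vModular p Ω (fun x => (u (φ (k+1)) x - u (φ k) x) / (2⁻¹:ℝ)^k)
        ≤ ENNReal.ofReal ((2⁻¹:ℝ)^k) * 1 := mul_le_mul_right (hmodd k) _
      _ = ENNReal.ofReal ((2⁻¹:ℝ)^k) := mul_one _
  have htsum : ∫⁻ x in Ω, ∑' k, g k x < ⊤ := by
    rw [lintegral_tsum fun k => (hgmeas k).aemeasurable]
    calc ∑' k, ∫⁻ x in Ω, g k x ≤ ∑' k, ENNReal.ofReal ((2⁻¹:ℝ)^k) :=
          ENNReal.tsum_le_tsum hgint
      _ = ∑' k, (2⁻¹:ℝ≥0∞)^k := by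
          congr 1
          funext k
          rw [ENNReal.ofReal_pow (by norm_num), ENNReal.ofReal_inv_of_pos (by norm_num),
            ENNReal.ofReal_ofNat]
      _ < ⊤ := by
          rw [ENNReal.tsum_geometric]
          simp [ENNReal.one_sub_inv_two]
  have hae : ∀ᵐ x ∂(volume.restrict Ω), ∑' k, g k x < ⊤ :=
    ae_lt_top (Measurable.ennreal_tsum hgmeas) htsum.ne
  have haeconv : ∀ᵐ x ∂(volume.restrict Ω),
      ∃ L : ℝ, Tendsto (fun k => u (φ k) x) atTop (𝓝 L) := by
    filter_upwards [hae, (ae_restrict_iff' hΩm).2 (ae_of_all _ fun x hx => hx)]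
      with x hx hxΩ
    have hsum1 : Summable fun k => (g k x).toReal := ENNReal.summable_toReal hx.ne
    have hgtoReal : ∀ k, (g k x).toReal =
        (2⁻¹:ℝ)^k * |(u (φ (k+1)) x - u (φ k) x) / (2⁻¹:ℝ)^k| ^ p x := fun k =>
      ENNReal.toReal_ofReal (by positivity)
    have habs : Summable fun k => |u (φ (k+1)) x - u (φ k) x| := by
      refine Summable.of_nonneg_of_le (fun k => abs_nonneg _) (fun k => ?_)
        ((summable_geometric_of_lt_one (r := (2⁻¹:ℝ)) (by norm_num) (by norm_num)).add
          hsum1)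
      rw [hgtoReal k]
      set c := (2⁻¹:ℝ)^k with hc
      have hc0 : 0 < c := by positivity
      set D := |u (φ (k+1)) x - u (φ k) x| with hD
      have hD0 : 0 ≤ D := abs_nonneg _
      have habsdiv : |(u (φ (k+1)) x - u (φ k) x) / c| = D / c := by
        rw [abs_div, abs_of_pos hc0]
      rw [habsdiv]
      rcases le_total (D / c) 1 with h | h
      · have : D ≤ c := by
          rw [div_le_one hc0] at h
          exact h
        have h2 : 0 ≤ c * (D/c) ^ p x := by positivity
        linarith
      · have h2 : D / c ≤ (D / c) ^ p x := by
          calc D / c = (D / c) ^ (1:ℝ) := (Real.rpow_one _).symm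
            _ ≤ (D / c) ^ p x :=
              Real.rpow_le_rpow_of_exponent_le h (hp1 x hxΩ)
        have h3 : D = c * (D / c) := by field_simp
        nlinarith
    obtain ⟨S, hS⟩ := habs.of_abs
    refine ⟨S + u (φ 0) x, ?_⟩
    have h3 : (fun m => ∑ k ∈ Finset.range m, (u (φ (k+1)) x - u (φ k) x)) =
        fun m => u (φ m) x - u (φ 0) x := by
      funext m
      exact Finset.sum_range_sub (fun k => u (φ k) x) m
    have h4 := hS.tendsto_sum_nat
    rw [h3] at h4
    have h5 := h4.add_const (u (φ 0) x)
    simpa using h5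
  obtain ⟨v, hvmeas, hvtend⟩ := measurable_limit_of_tendsto_metrizable_ae
    (f := fun k => u (φ k)) (μ := volume.restrict Ω)
    (fun k => (hui (φ k)).1.aemeasurable) haeconv
  -- Fatou
  have hfatou : ∀ (i : ℕ) (l : ℝ), 0 < l →
      (∀ᶠ k in atTop, vModular p Ω (fun x => (u i x - u (φ k) x) / l) ≤ 1) →
      vModular p Ω (fun x => (u i x - v x) / l) ≤ 1 := by
    intro i l hl hev
    have hmeask : ∀ k, Measurable fun x =>
        ENNReal.ofReal (|(u i x - u (φ k) x) / l| ^ p x) := fun k =>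
      measurable_vint hpm (((hui i).1.sub (hui (φ k)).1).div_const l)
    have hle1 : vModular p Ω (fun x => (u i x - v x) / l) ≤
        Filter.liminf
          (fun k => vModular p Ω (fun x => (u i x - u (φ k) x) / l)) atTop := by
      unfold vModular
      calc ∫⁻ x in Ω, ENNReal.ofReal (|(u i x - v x) / l| ^ p x)
          = ∫⁻ x in Ω, Filter.liminf
              (fun k => ENNReal.ofReal (|(u i x - u (φ k) x) / l| ^ p x)) atTop := by
            refine lintegral_congr_ae ?_
            filter_upwards [hvtend,
              (ae_restrict_iff' hΩm).2 (ae_of_all _ fun x hx => hx)] with x hx hxΩ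
            have hc1 : Continuous fun t : ℝ => (u i x - t) / l :=
              (continuous_const.sub continuous_id).div_const l
            have hc2 : ContinuousAt (fun s : ℝ => s ^ p x) |(u i x - v x) / l| :=
              Real.continuousAt_rpow_const _ _
                (Or.inr (zero_le_one.trans (hp1 x hxΩ)))
            have hc1' : ContinuousAt (fun t : ℝ => |(u i x - t) / l|) (v x) :=
              (continuous_abs.comp hc1).continuousAt
            have hstep : ContinuousAt
                ((fun s : ℝ => s ^ p x) ∘ (fun t : ℝ => |(u i x - t) / l|)) (v x) :=
              ContinuousAt.comp hc2 hc1'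
            have hcont : ContinuousAt
                (ENNReal.ofReal ∘ ((fun s : ℝ => s ^ p x) ∘
                  (fun t : ℝ => |(u i x - t) / l|))) (v x) :=
              ContinuousAt.comp ENNReal.continuous_ofReal.continuousAt hstep
            have htendk := hcont.tendsto.comp hx
            exact (htendk.liminf_eq).symm
        _ ≤ Filter.liminf
            (fun k => ∫⁻ x in Ω, ENNReal.ofReal (|(u i x - u (φ k) x) / l| ^ p x))
            atTop := lintegral_liminf_le hmeask
    refine hle1.trans (le_trans (Filter.liminf_le_liminf hev) ?_)
    exact le_of_eq (Filter.liminf_const 1)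
  have hC2 : ∀ ε : ℝ, 0 < ε → ∃ N, ∀ i ≥ N,
      vModular p Ω (fun x => (u i x - v x) / ε) ≤ 1 := by
    intro ε hε
    obtain ⟨N, hN⟩ := hCl ε hε
    refine ⟨N, fun i hi => hfatou i ε hε ?_⟩
    filter_upwards [eventually_ge_atTop N] with k hk
    exact vmod_le_of_luxNorm_lt hpm hp1 hΩm
      (memLp_sub hpm hp1 hΩm (hui i) (hui (φ k)))
      (hN i hi (φ k) (le_trans hk (hφge k)))
  -- v is in L^p
  have hvLp : MemLpVar p Ω v := by
    obtain ⟨N, hN⟩ := hC2 1 one_pos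
    have h1 : MemLpVar p Ω (fun x => u N x - v x) :=
      ⟨(hui N).1.sub hvmeas, 1, one_pos,
        lt_of_le_of_lt (hN N le_rfl) ENNReal.one_lt_top⟩
    have h2 := memLp_sub hpm hp1 hΩm (hui N) h1
    have heq : (fun x => u N x - (u N x - v x)) = v := by funext x; ring
    rwa [heq] at h2
  -- lux convergence
  have hC3 : Tendsto (fun i => luxNorm p Ω (fun x => u i x - v x)) atTop (𝓝 0) := by
    rw [Metric.tendsto_atTop]
    intro ε hε
    obtain ⟨N, hN⟩ := hC2 (ε/2) (half_pos hε)
    refine ⟨N, fun i hi => ?_⟩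
    rw [Real.dist_eq, sub_zero, abs_of_nonneg (luxNorm_nonneg _)]
    have := luxNorm_le (half_pos hε) (hN i hi)
    linarith
  -- bv convergence
  have hD : ∀ ε : ℝ, 0 < ε → ∃ N, ∀ i ≥ N,
      bvModular p Ω (fun x => (u i x - v x) / ε) ≤ 1 := by
    intro ε hε
    obtain ⟨N, hN⟩ := hcau ε hε
    have hNs : ∀ i ≥ N, ∀ j ≥ N,
        bvModular p Ω (fun x => (u i x - u j x) / ε) ≤ 1 := by
      intro i hi j hj
      have hlt : sInf {l : ℝ | 0 < l ∧
          bvModular p Ω (fun x => (u i x - u j x) / l) ≤ 1} < ε :=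
        lt_of_le_of_lt (le_add_of_nonneg_left (luxNorm_nonneg _)) (hN i hi j hj)
      have hne : Set.Nonempty {l : ℝ | 0 < l ∧
          bvModular p Ω (fun x => (u i x - u j x) / l) ≤ 1} := by
        obtain ⟨l, hl0, hl1⟩ := bv_nonempty_diff hpm hp1 hM' hΩ (hu i) (hu j)
        exact ⟨l, hl0, hl1⟩
      obtain ⟨a, ⟨ha0, ha1⟩, hac⟩ := exists_lt_of_csInf_lt hne hlt
      exact bv_upclosed hpm hp1 hΩm
        (memLp_sub hpm hp1 hΩm (hui i) (hui j)) ha0 hac.le ha1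
    refine ⟨N, fun i hi => ?_⟩
    refine bv_lsc hpm hp1 hΩm
      (W := fun j => fun x => (u i x - u (φ (j+N)) x) / ε)
      (w := fun x => (u i x - v x) / ε)
      (fun j => memLp_div hε.ne' (memLp_sub hpm hp1 hΩm (hui i) (hui (φ (j+N)))))
      (memLp_div hε.ne' (memLp_sub hpm hp1 hΩm (hui i) hvLp))
      (fun j => hNs i hi (φ (j+N)) (le_trans (Nat.le_add_left N j) (hφge (j+N))))
      ?_
    have heqj : ∀ j : ℕ, (fun x => (u i x - u (φ (j+N)) x) / ε - (u i x - v x) / ε) =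
        fun x => ε⁻¹ * (v x - u (φ (j+N)) x) := by
      intro j
      funext x
      ring
    have key : ∀ j : ℕ, luxNorm p Ω
        (fun x => (u i x - u (φ (j+N)) x) / ε - (u i x - v x) / ε) ≤
        |ε⁻¹| * luxNorm p Ω (fun x => u (φ (j+N)) x - v x) := by
      intro j
      rw [heqj j]
      calc luxNorm p Ω (fun x => ε⁻¹ * (v x - u (φ (j+N)) x))
          ≤ |ε⁻¹| * luxNorm p Ω (fun x => v x - u (φ (j+N)) x) :=
            luxNorm_smul_le hpm hp1 hΩm (by positivity)
              (memLp_sub hpm hp1 hΩm hvLp (hui _))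
        _ = |ε⁻¹| * luxNorm p Ω (fun x => u (φ (j+N)) x - v x) := by
            rw [luxNorm_congr (w := fun x => u (φ (j+N)) x - v x)
              (fun x => abs_sub_comm _ _)]
    refine squeeze_zero (fun j => luxNorm_nonneg _) key ?_
    have htendsub : Tendsto (fun j : ℕ => luxNorm p Ω
        (fun x => u (φ (j+N)) x - v x)) atTop (𝓝 0) := by
      have hmono2 : StrictMono fun j : ℕ => φ (j + N) :=
        hφmono.comp fun a b hab => by omega
      exact hC3.comp hmono2.tendsto_atTop
    have := htendsub.const_mul |ε⁻¹|
    simpa using this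
  -- v is in the BV space
  have hbvfin : bvModular p Ω v < ⊤ := by
    obtain ⟨N1, hN1⟩ := hD 1 one_pos
    have h1 : bvModular p Ω (fun x => (u N1 x - v x) / (1:ℝ)) ≤ 1 := hN1 N1 le_rfl
    rw [show (fun x => (u N1 x - v x) / (1:ℝ)) = fun x => u N1 x - v x by
      funext x; rw [div_one]] at h1
    have hmemdiff : MemLpVar p Ω (fun x => u N1 x - v x) :=
      memLp_sub hpm hp1 hΩm (hui N1) hvLp
    have h2 := bv_smul hpm hp1 hM' hΩm (by norm_num : (-1:ℝ) ≠ 0) hmemdiff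
      (lt_of_le_of_lt h1 ENNReal.one_lt_two)
    rw [show (fun x => (-1:ℝ) * (u N1 x - v x)) = fun x => v x - u N1 x by
      funext x; ring] at h2
    set C := ENNReal.ofReal ((max |(-1:ℝ)| 1) ^ M') * 2 with hCdef
    have hCne : C ≠ ⊤ := ENNReal.mul_ne_top ENNReal.ofReal_ne_top
      ENNReal.ofNat_ne_top
    have h3 := bv_add hpm hp1 hM' hΩ (hui N1)
      (memLp_sub hpm hp1 hΩm hvLp (hui N1))
      (ENNReal.lt_add_right (hu N1).2.ne one_ne_zero)
      (lt_of_le_of_lt h2 (ENNReal.lt_add_right hCne one_ne_zero))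
    rw [show (fun x => u N1 x + (v x - u N1 x)) = v by funext x; ring] at h3
    refine lt_of_le_of_lt h3 ?_
    refine ENNReal.mul_lt_top ENNReal.ofReal_lt_top ?_
    rw [ENNReal.add_lt_top]
    constructor
    · rw [ENNReal.add_lt_top]
      exact ⟨(hu N1).2, ENNReal.one_lt_top⟩
    · rw [ENNReal.add_lt_top]
      exact ⟨hCne.lt_top, ENNReal.one_lt_top⟩
  -- conclusion
  refine ⟨v, ⟨hvLp, hbvfin⟩, ?_⟩
  have hpart2 : Tendsto (fun i => sInf {l : ℝ | 0 < l ∧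
      bvModular p Ω (fun x => (u i x - v x) / l) ≤ 1}) atTop (𝓝 0) := by
    rw [Metric.tendsto_atTop]
    intro ε hε
    obtain ⟨N, hN⟩ := hD (ε/2) (half_pos hε)
    refine ⟨N, fun i hi => ?_⟩
    rw [Real.dist_eq, sub_zero, abs_of_nonneg (Real.sInf_nonneg fun y hy => hy.1.le)]
    have hle : sInf {l : ℝ | 0 < l ∧
        bvModular p Ω (fun x => (u i x - v x) / l) ≤ 1} ≤ ε/2 :=
      csInf_le ⟨0, fun y hy => hy.1.le⟩ ⟨half_pos hε, hN i hi⟩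
    linarith
  have := hC3.add hpart2
  simpa [bvNorm] using this
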